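/- For every $A > 0$ there exists $v \in \mathbb{N}$ such that for every $n \in \mathbb{N}$ there exists a real polynomial $q$ of degree $v \lceil \sqrt{n} \rceil$ all of whose roots are real, with $q(0) = 1$ and $\sum_{k=1}^n |q(k)| < \frac{1}{A}$. -/

import Mathlib

open Polynomial Real

/-- The even part of Chebyshev U: `auxP m` satisfies `auxP m (s^2) = U (2m) (s)`. -/
noncomputable def auxP : ℕ → Polynomial ℝ
  | 0 => 1
  | 1 => 4 * X - 1
  | (m+2) => (4 * X - 2) * auxP (m+1) - auxP m

lemma U_even_rec (k : ℤ) : Chebyshev.U ℝ (k+4) =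
    (4*X^2-2) * Chebyshev.U ℝ (k+2) - Chebyshev.U ℝ k := by
  have e1 := Chebyshev.U_add_two ℝ (k+2)
  have e2 := Chebyshev.U_add_two ℝ (k+1)
  have e3 := Chebyshev.U_add_two ℝ k
  rw [show k+2+2 = k+4 by ring, show k+2+1 = k+3 by ring] at e1
  rw [show k+1+2 = k+3 by ring, show k+1+1 = k+2 by ring] at e2
  linear_combination e1 + 2*X*e2 + e3

lemma auxP_comp : ∀ m : ℕ, (auxP m).comp (X^2) = Chebyshev.U ℝ (2*(m:ℤ))
  | 0 => by simp [auxP, Chebyshev.U_zero]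
  | 1 => by
      rw [show auxP 1 = 4*X-1 from rfl, show (2*((1:ℕ):ℤ)) = 2 by norm_num,
        Chebyshev.U_two]
      simp [sub_comp, mul_comp]
  | (m+2) => by
      have h1 := auxP_comp m
      have h2 := auxP_comp (m+1)
      rw [show auxP (m+2) = (4*X-2)*auxP (m+1) - auxP m from rfl]
      rw [show (2*(((m+2):ℕ):ℤ)) = 2*(m:ℤ)+4 by push_cast; ring, U_even_rec,
        show (2*(m:ℤ)+2) = 2*(((m+1):ℕ):ℤ) by push_cast; ring, ← h1, ← h2]
      simp only [sub_comp, mul_comp, X_comp, ofNat_comp]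
      ring

lemma auxP_eval_sq (m : ℕ) (s : ℝ) :
    (auxP m).eval (s^2) = (Chebyshev.U ℝ (2*(m:ℤ))).eval s := by
  have := congrArg (eval s) (auxP_comp m)
  simpa [eval_comp] using this

lemma auxP_eval_one : ∀ m : ℕ, (auxP m).eval 1 = 2*(m:ℝ)+1
  | 0 => by simp [auxP]
  | 1 => by norm_num [auxP]
  | (m+2) => by
      have h1 := auxP_eval_one m
      have h2 := auxP_eval_one (m+1)
      rw [show auxP (m+2) = (4*X-2)*auxP (m+1) - auxP m from rfl]
      simp only [eval_sub, eval_mul, eval_ofNat, eval_X, h1, h2]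
      push_cast
      ring

lemma auxP_natDegree_le : ∀ m : ℕ, (auxP m).natDegree ≤ m
  | 0 => by simp [auxP]
  | 1 => by
      rw [show auxP 1 = 4*X-1 from rfl]
      compute_degree
  | (m+2) => by
      have h1 := auxP_natDegree_le m
      have h2 := auxP_natDegree_le (m+1)
      rw [show auxP (m+2) = (4*X-2)*auxP (m+1) - auxP m from rfl]
      refine le_trans (natDegree_sub_le _ _) ?_
      rw [max_le_iff]
      constructor
      · refine le_trans (natDegree_mul_le) ?_
        have h3 : (4*X-2 : Polynomial ℝ).natDegree ≤ 1 := by compute_degree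
        omega
      · omega

lemma sum_inv_sq_le (n : ℕ) : ∑ k ∈ Finset.Icc 1 n, (1:ℝ)/(k:ℝ)^2 ≤ 2 := by
  have key : ∀ m : ℕ, 1 ≤ m → ∑ k ∈ Finset.Icc 1 m, (1:ℝ)/(k:ℝ)^2 ≤ 2 - 1/(m:ℝ) := by
    intro m hm
    induction m with
    | zero => omega
    | succ p ih =>
      rcases Nat.eq_zero_or_pos p with hp | hp
      · subst hp; norm_num
      · rw [Finset.sum_Icc_succ_top (by omega : 1 ≤ p + 1)]
        have hp1 : (1:ℝ) ≤ p := by exact_mod_cast hp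
        have key2 : (1:ℝ)/((p:ℝ)+1)^2 ≤ 1/(p:ℝ) - 1/((p:ℝ)+1) := by
          rw [div_sub_div _ _ (by positivity) (by positivity),
            div_le_div_iff₀ (by positivity) (by positivity)]
          ring_nf
          nlinarith
        have h := ih hp
        push_cast
        push_cast at h
        linarith
  rcases Nat.eq_zero_or_pos n with hn | hn
  · subst hn; simp
  · have h := key n hn
    have h1 : (0:ℝ) < n := by exact_mod_cast hn
    have h2 : (0:ℝ) < 1/(n:ℝ) := by positivity
    linarith

/-- For every `A > 0` there is `v ∈ ℕ` such that for every `n` there is a real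
polynomial `q` of degree `v ⌈√n⌉` with all roots real, `q(0) = 1`, and
`∑_{k=1}^n |q(k)| < 1/A`. -/
theorem auxiliary_polynomial (A : ℝ) (hA : 0 < A) :
    ∃ v : ℕ, 0 < v ∧ ∀ n : ℕ,
      ∃ q : Polynomial ℝ,
        q.natDegree = v * ⌈Real.sqrt n⌉₊ ∧
        q.roots.card = q.natDegree ∧
        q.eval 0 = 1 ∧
        (∑ k ∈ Finset.Icc 1 n, |q.eval (k : ℝ)|) < 1 / A := by
  set c := ⌈A⌉₊ with hc
  have hAc : A ≤ (c : ℝ) := Nat.le_ceil A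
  have hc2 : (c : ℝ) < 2^c := by exact_mod_cast Nat.lt_two_pow_self (n := c)
  refine ⟨c + 4, by omega, fun n => ?_⟩
  rcases Nat.eq_zero_or_pos n with hn | hn
  · subst hn
    refine ⟨1, by simp, by simp, by simp, ?_⟩
    rw [Finset.Icc_eq_empty_of_lt (by norm_num : (0:ℕ) < 1)]
    simp
    positivity
  · set ℓ := ⌈Real.sqrt n⌉₊ with hℓdef
    have hn0 : (0:ℝ) < n := by exact_mod_cast hn
    have hsqpos : 0 < Real.sqrt n := Real.sqrt_pos.2 hn0
    have hsq : Real.sqrt n ≤ (ℓ : ℝ) := Nat.le_ceil _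
    have hℓ1 : 1 ≤ ℓ := Nat.ceil_pos.2 hsqpos
    set D : ℝ := 2*(ℓ:ℝ)+1 with hDdef
    have hD : (0:ℝ) < D := by positivity
    set q1 : Polynomial ℝ := C D⁻¹ * (auxP ℓ).comp (1 - C (n:ℝ)⁻¹ * X) with hq1
    have heval : ∀ t : ℝ, q1.eval t = D⁻¹ * (auxP ℓ).eval (1 - t/n) := by
      intro t
      rw [hq1]
      simp only [eval_mul, eval_C, eval_comp, eval_sub, eval_one, eval_X]
      rw [show (1:ℝ) - t/n = 1 - (n:ℝ)⁻¹ * t by ring]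
    have heval0 : q1.eval 0 = 1 := by
      have h0 : (1:ℝ) - 0/(n:ℝ) = 1 := by norm_num
      rw [heval, h0, auxP_eval_one, ← hDdef, inv_mul_cancel₀ hD.ne']
    -- the roots
    set x : ℕ → ℝ := fun j => (j:ℝ) * π / D with hx
    set r : ℕ → ℝ := fun j => (n:ℝ) * Real.sin (x j) ^ 2 with hr
    have hxmem : ∀ j ∈ Finset.Icc 1 ℓ, 0 < x j ∧ x j ≤ π/2 := by
      intro j hj
      rw [Finset.mem_Icc] at hj
      have hj1 : (1:ℝ) ≤ j := by exact_mod_cast hj.1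
      have hjl : (j:ℝ) ≤ ℓ := by exact_mod_cast hj.2
      simp only [hx]
      constructor
      · exact div_pos (by positivity) hD
      · rw [div_le_div_iff₀ hD (by norm_num : (0:ℝ) < 2), hDdef]
        nlinarith [pi_pos]
    have hroot : ∀ j ∈ Finset.Icc 1 ℓ, q1.eval (r j) = 0 := by
      intro j hj
      obtain ⟨hx0, hx2⟩ := hxmem j hj
      have hsin : 0 < Real.sin (x j) :=
        Real.sin_pos_of_pos_of_lt_pi hx0 (lt_of_le_of_lt hx2 (by linarith [pi_pos]))
      rw [heval]
      have h1 : 1 - r j / n = Real.cos (x j) ^ 2 := by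
        simp only [hr]
        have hdd : (n:ℝ) * Real.sin (x j)^2 / n = Real.sin (x j)^2 := by
          field_simp
        rw [hdd]
        linarith [Real.sin_sq_add_cos_sq (x j)]
      rw [h1, auxP_eval_sq]
      have hU := Chebyshev.U_real_cos (x j) (2*(ℓ:ℤ))
      push_cast at hU
      have hxj : (2*(ℓ:ℝ) + 1) * x j = (j:ℝ) * π := by
        simp only [hx]
        rw [hDdef]
        field_simp
      rw [hxj, Real.sin_nat_mul_pi j] at hU
      rcases mul_eq_zero.1 hU with h | h
      · exact mul_eq_zero_of_right _ h
      · exact absurd h hsin.ne'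
    have hmono : ∀ a b, a ∈ Finset.Icc 1 ℓ → b ∈ Finset.Icc 1 ℓ → a < b → r a < r b := by
      intro a b ha hb hab
      obtain ⟨ha0, ha2⟩ := hxmem a ha
      obtain ⟨hb0, hb2⟩ := hxmem b hb
      have hxlt : x a < x b := by
        simp only [hx]
        have hab' : (a:ℝ) < b := by exact_mod_cast hab
        have h1 : (a:ℝ)*π < (b:ℝ)*π := by nlinarith [pi_pos]
        exact div_lt_div_of_pos_right h1 hD
      have hs : Real.sin (x a) < Real.sin (x b) :=
        Real.strictMonoOn_sin ⟨by linarith [pi_pos], by linarith⟩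
          ⟨by linarith [pi_pos], by linarith⟩ hxlt
      have hsa : 0 ≤ Real.sin (x a) := le_of_lt
        (Real.sin_pos_of_pos_of_lt_pi ha0 (by linarith [pi_pos]))
      simp only [hr]
      have hsq2 : Real.sin (x a) ^ 2 < Real.sin (x b) ^ 2 := by nlinarith
      nlinarith
    have hinj : Set.InjOn r (Finset.Icc 1 ℓ) := by
      intro a ha b hb hab
      simp only [Finset.coe_Icc, Set.mem_Icc] at ha hb
      by_contra hne
      rcases lt_or_gt_of_ne hne with h | h
      · exact absurd hab (ne_of_lt (hmono a b (Finset.mem_Icc.2 ha)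
          (Finset.mem_Icc.2 hb) h))
      · exact absurd hab.symm (ne_of_lt (hmono b a (Finset.mem_Icc.2 hb)
          (Finset.mem_Icc.2 ha) h))
    have hq1ne : q1 ≠ 0 := by
      intro h
      rw [h] at heval0
      simp at heval0
    have hdegle : q1.natDegree ≤ ℓ := by
      rw [hq1]
      refine le_trans (natDegree_mul_le) ?_
      rw [natDegree_C, zero_add]
      refine le_trans (natDegree_comp_le) ?_
      have h2 : (1 - C ((n:ℝ))⁻¹ * X).natDegree ≤ 1 := by compute_degree
      have h1 := auxP_natDegree_le ℓ
      calc (auxP ℓ).natDegree * (1 - C ((n:ℝ))⁻¹ * X).natDegree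
          ≤ ℓ * 1 := Nat.mul_le_mul h1 h2
        _ = ℓ := by omega
    have hcard_ge : ℓ ≤ Multiset.card q1.roots := by
      have hsub : (Finset.Icc 1 ℓ).image r ⊆ q1.roots.toFinset := by
        intro t ht
        rw [Finset.mem_image] at ht
        obtain ⟨j, hj, rfl⟩ := ht
        rw [Multiset.mem_toFinset, mem_roots hq1ne]
        exact hroot j hj
      calc ℓ = (Finset.Icc 1 ℓ).card := by simp
        _ = ((Finset.Icc 1 ℓ).image r).card := (Finset.card_image_of_injOn hinj).symm
        _ ≤ q1.roots.toFinset.card := Finset.card_le_card hsub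
        _ ≤ Multiset.card q1.roots := q1.roots.toFinset_card_le
    have hcard_le : Multiset.card q1.roots ≤ q1.natDegree := q1.card_roots'
    have hdeg : q1.natDegree = ℓ := le_antisymm hdegle (hcard_ge.trans hcard_le)
    have hcard : Multiset.card q1.roots = ℓ :=
      le_antisymm (hcard_le.trans (le_of_eq hdeg)) hcard_ge
    -- the bound at integer points
    have hbound : ∀ k ∈ Finset.Icc 1 n, |q1.eval (k:ℝ)| ≤ 1/(2*Real.sqrt k) := by
      intro k hk
      rw [Finset.mem_Icc] at hk
      have hk1 : (1:ℝ) ≤ k := by exact_mod_cast hk.1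
      have hkn : (k:ℝ) ≤ n := by exact_mod_cast hk.2
      have hkp : (0:ℝ) < k := by linarith
      have hkn' : (k:ℝ)/n ≤ 1 := by rw [div_le_one hn0]; exact hkn
      have hfrac : (0:ℝ) ≤ 1 - (k:ℝ)/n := by linarith
      set s := Real.sqrt (1 - (k:ℝ)/n) with hs
      have hs1 : s ≤ 1 := by
        have hkn0 : (0:ℝ) ≤ (k:ℝ)/n := by positivity
        calc s = Real.sqrt (1 - (k:ℝ)/n) := hs
          _ ≤ Real.sqrt 1 := Real.sqrt_le_sqrt (by linarith)
          _ = 1 := Real.sqrt_one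
      have hs0 : 0 ≤ s := Real.sqrt_nonneg _
      set θ := Real.arccos s with hθ
      have hcos : Real.cos θ = s := Real.cos_arccos (by linarith) hs1
      have hs2 : s^2 = 1 - (k:ℝ)/n := Real.sq_sqrt hfrac
      have hsin : Real.sin θ = Real.sqrt ((k:ℝ)/n) := by
        rw [hθ, Real.sin_arccos]
        congr 1
        rw [hs2]
        ring
      have hsinpos : 0 < Real.sin θ := by
        rw [hsin]
        positivity
      have hqk : q1.eval (k:ℝ) = D⁻¹ * (Chebyshev.U ℝ (2*(ℓ:ℤ))).eval (Real.cos θ) := by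
        rw [heval, hcos, ← auxP_eval_sq, hs2]
      have hU := Chebyshev.U_real_cos θ (2*(ℓ:ℤ))
      have habs : |(Chebyshev.U ℝ (2*(ℓ:ℤ))).eval (Real.cos θ)| ≤ 1 / Real.sin θ := by
        rw [le_div_iff₀ hsinpos]
        calc |(Chebyshev.U ℝ (2*(ℓ:ℤ))).eval (Real.cos θ)| * Real.sin θ
            = |(Chebyshev.U ℝ (2*(ℓ:ℤ))).eval (Real.cos θ) * Real.sin θ| := by
              rw [abs_mul, abs_of_pos hsinpos]
          _ ≤ 1 := by rw [hU]; exact Real.abs_sin_le_one _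
      have hsk : 0 < Real.sqrt k := Real.sqrt_pos.2 hkp
      have hsn : 0 < Real.sqrt n := hsqpos
      have hsinval : Real.sin θ = Real.sqrt k / Real.sqrt n := by
        rw [hsin, Real.sqrt_div hkp.le]
      have hD2 : 2*Real.sqrt n ≤ D := by rw [hDdef]; linarith
      rw [hqk, abs_mul, abs_inv, abs_of_pos hD]
      calc D⁻¹ * |(Chebyshev.U ℝ (2*(ℓ:ℤ))).eval (Real.cos θ)|
          ≤ D⁻¹ * (1 / Real.sin θ) := by
            exact mul_le_mul_of_nonneg_left habs (inv_nonneg.2 hD.le)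
        _ = D⁻¹ * (Real.sqrt n / Real.sqrt k) := by rw [hsinval, one_div_div]
        _ ≤ (2*Real.sqrt n)⁻¹ * (Real.sqrt n / Real.sqrt k) := by
            gcongr
        _ = 1/(2*Real.sqrt k) := by field_simp
    -- conclude
    refine ⟨q1^(c+4), ?_, ?_, ?_, ?_⟩
    · rw [natDegree_pow, hdeg]
    · rw [roots_pow, Multiset.card_nsmul, hcard, natDegree_pow, hdeg]
    · rw [eval_pow, heval0, one_pow]
    · have hkb : ∀ k ∈ Finset.Icc 1 n,
          |(q1^(c+4)).eval (k:ℝ)| ≤ (1/2)^c * (1/16) * (1/(k:ℝ)^2) := by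
        intro k hk
        have hk' := hk
        rw [Finset.mem_Icc] at hk'
        have hk1 : (1:ℝ) ≤ k := by exact_mod_cast hk'.1
        have hkp : (0:ℝ) < k := by linarith
        have hsk1 : (1:ℝ) ≤ Real.sqrt k := by
          rw [show (1:ℝ) = Real.sqrt 1 by simp]
          exact Real.sqrt_le_sqrt hk1
        have hb := hbound k hk
        calc |(q1^(c+4)).eval (k:ℝ)| = |q1.eval (k:ℝ)|^(c+4) := by rw [eval_pow, abs_pow]
          _ ≤ (1/(2*Real.sqrt k))^(c+4) := pow_le_pow_left₀ (abs_nonneg _) hb _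
          _ = (1/(2*Real.sqrt k))^c * (1/(2*Real.sqrt k))^4 := by rw [pow_add]
          _ ≤ (1/2)^c * (1/(2*Real.sqrt k))^4 := by
              have hhalf : 1/(2*Real.sqrt k) ≤ 1/2 := by
                rw [div_le_div_iff₀ (by positivity) (by norm_num : (0:ℝ) < 2)]
                linarith
              exact mul_le_mul_of_nonneg_right
                (pow_le_pow_left₀ (by positivity) hhalf c) (by positivity)
          _ = (1/2)^c * (1/16) * (1/(k:ℝ)^2) := by
              have h4 : (Real.sqrt k)^4 = (k:ℝ)^2 := by
                rw [show 4 = 2*2 from rfl, pow_mul, Real.sq_sqrt hkp.le]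
              have h24 : (1/(2*Real.sqrt k))^4 = 1/(16*(k:ℝ)^2) := by
                rw [div_pow, one_pow,
                  show (2*Real.sqrt k)^4 = 16 * (Real.sqrt k)^4 by ring, h4]
              rw [h24]
              ring
      have h2c : (0:ℝ) < 2^c := by positivity
      have hA8 : A < 8*2^c := by linarith
      calc ∑ k ∈ Finset.Icc 1 n, |(q1^(c+4)).eval (k:ℝ)|
          ≤ ∑ k ∈ Finset.Icc 1 n, (1/2)^c * (1/16) * (1/(k:ℝ)^2) := Finset.sum_le_sum hkb
        _ = (1/2)^c * (1/16) * ∑ k ∈ Finset.Icc 1 n, (1:ℝ)/(k:ℝ)^2 := by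
            rw [← Finset.mul_sum]
        _ ≤ (1/2)^c * (1/16) * 2 := by
            have := sum_inv_sq_le n
            gcongr
        _ = 1/(8*2^c) := by
            rw [div_pow, one_pow]
            field_simp
            ring
        _ < 1/A := one_div_lt_one_div_of_lt hA hA8
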